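/- Let P ⊆ Im(O') be a 3-dimensional subspace with q|_P positive definite. Then the map sending a pair (u,v), with u ∈ P, q(u) = 1, v ∈ P⊥, q(v) = −1, to the line ℝ(u+v), surjects onto the set of isotropic lines of Im(O'), and it is exactly two-to-one: for every isotropic line ℓ the pairs mapping to ℓ are precisely (u,v) and (−u,−v) for a single such pair (u,v). -/

import Mathlib

noncomputable section

open Quaternion

/-- The split octonions `𝕆' = ℍ × ℍ`. -/
abbrev SplitOct : Type := ℍ[ℝ] × ℍ[ℝ]

namespace SplitOct

/-- Split octonion multiplication `(a,b)(c,d) = (ac + d̄b, da + bc̄)`. -/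
def mul (x y : SplitOct) : SplitOct :=
  (x.1 * y.1 + star y.2 * x.2, y.2 * x.1 + x.2 * star y.1)

/-- Split octonion conjugation `(a,b)* = (ā, −b)`. -/
def conj (x : SplitOct) : SplitOct := (star x.1, -x.2)

lemma conj_add (x y : SplitOct) : conj (x + y) = conj x + conj y := by
  simp only [conj, Prod.fst_add, Prod.snd_add, star_add, Prod.mk_add_mk, neg_add]

lemma conj_neg (x : SplitOct) : conj (-x) = -conj x := by
  simp [conj, Prod.ext_iff]

lemma conj_sub (x y : SplitOct) : conj (x - y) = conj x - conj y := by
  rw [sub_eq_add_neg, conj_add, conj_neg, ← sub_eq_add_neg]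

lemma conj_smul (r : ℝ) (x : SplitOct) : conj (r • x) = r • conj x := by
  simp [conj, Prod.ext_iff]

lemma conj_conj (x : SplitOct) : conj (conj x) = x := by
  simp [conj]

lemma conj_zero : conj 0 = 0 := by
  simp [conj, Prod.ext_iff]

/-- The imaginary split octonions `Im 𝕆' = {x | x* = −x}`. -/
def Im : Submodule ℝ SplitOct where
  carrier := {x | conj x = -x}
  add_mem' := by
    intro a b ha hb
    simp only [Set.mem_setOf_eq] at ha hb ⊢
    rw [conj_add, ha, hb, neg_add]
  zero_mem' := by
    simp only [Set.mem_setOf_eq, conj_zero, neg_zero]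
  smul_mem' := by
    intro r a ha
    simp only [Set.mem_setOf_eq] at ha ⊢
    rw [conj_smul, ha, smul_neg]

lemma mem_Im_iff {x : SplitOct} : x ∈ Im ↔ conj x = -x := Iff.rfl

/-- `q x = x·x*`, read as a real number (its values lie in `ℝ·1 ≅ ℝ`). -/
def q (x : SplitOct) : ℝ := (mul x (conj x)).1.re

/-- The polarization `⟨x,y⟩` of the quadratic form `q`. -/
def polar (x y : SplitOct) : ℝ := (q (x + y) - q x - q y) / 2

/-- The cross product `x × y = (xy − (xy)*)/2`. -/
def cross (x y : SplitOct) : SplitOct := (2 : ℝ)⁻¹ • (mul x y - conj (mul x y))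

/-- The scalar triple product `Ω(u,v,w) = ⟨u×v, w⟩`. -/
def triple (u v w : SplitOct) : ℝ := polar (cross u v) w

lemma q_apply (x : SplitOct) : q x = normSq x.1 - normSq x.2 := by
  simp only [q, mul, conj, star_neg, neg_mul, Quaternion.self_mul_star, Quaternion.star_mul_self,
    Quaternion.re_add, Quaternion.re_neg, Quaternion.re_coe]
  ring

lemma polar_apply (x y : SplitOct) :
    polar x y = (x.1 * star y.1).re - (x.2 * star y.2).re := by
  simp only [polar, q_apply, Prod.fst_add, Prod.snd_add, Quaternion.normSq_def',
    Quaternion.re_mul, Quaternion.re_add, Quaternion.imI_add, Quaternion.imJ_add,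
    Quaternion.imK_add, Quaternion.re_star, Quaternion.imI_star, Quaternion.imJ_star,
    Quaternion.imK_star]
  ring

lemma polar_add_left (x x' y : SplitOct) : polar (x + x') y = polar x y + polar x' y := by
  simp only [polar_apply, Prod.fst_add, Prod.snd_add, add_mul, Quaternion.re_add]
  ring

lemma polar_add_right (x y y' : SplitOct) : polar x (y + y') = polar x y + polar x y' := by
  simp only [polar_apply, Prod.fst_add, Prod.snd_add, star_add, mul_add, Quaternion.re_add]
  ring

lemma polar_smul_left (r : ℝ) (x y : SplitOct) : polar (r • x) y = r * polar x y := by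
  simp only [polar_apply, Prod.smul_fst, Prod.smul_snd, smul_mul_assoc, Quaternion.re_smul,
    smul_eq_mul]
  ring

lemma polar_smul_right (r : ℝ) (x y : SplitOct) : polar x (r • y) = r * polar x y := by
  simp only [polar_apply, Prod.smul_fst, Prod.smul_snd, Quaternion.star_smul,
    mul_smul_comm, Quaternion.re_smul, smul_eq_mul]
  ring

lemma polar_zero_left (y : SplitOct) : polar 0 y = 0 := by
  simp [polar_apply]

lemma polar_zero_right (x : SplitOct) : polar x 0 = 0 := by
  simp [polar_apply]

lemma mul_add_left (x x' y : SplitOct) : mul (x + x') y = mul x y + mul x' y := by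
  simp only [mul, Prod.fst_add, Prod.snd_add, add_mul, mul_add, Prod.mk_add_mk, Prod.mk.injEq]
  constructor <;> abel

lemma mul_add_right (x y y' : SplitOct) : mul x (y + y') = mul x y + mul x y' := by
  simp only [mul, Prod.fst_add, Prod.snd_add, star_add, add_mul, mul_add, Prod.mk_add_mk,
    Prod.mk.injEq]
  constructor <;> abel

lemma mul_smul_left (r : ℝ) (x y : SplitOct) : mul (r • x) y = r • mul x y := by
  simp only [mul, Prod.smul_fst, Prod.smul_snd, smul_mul_assoc, mul_smul_comm, Prod.smul_mk,
    smul_add]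

lemma mul_smul_right (r : ℝ) (x y : SplitOct) : mul x (r • y) = r • mul x y := by
  simp only [mul, Prod.smul_fst, Prod.smul_snd, Quaternion.star_smul, smul_mul_assoc,
    mul_smul_comm, Prod.smul_mk, smul_add]

lemma mul_zero_left (y : SplitOct) : mul 0 y = 0 := by
  simp [mul, Prod.ext_iff]

lemma mul_zero_right (x : SplitOct) : mul x 0 = 0 := by
  simp [mul, Prod.ext_iff]

lemma cross_add_left (x x' y : SplitOct) : cross (x + x') y = cross x y + cross x' y := by
  rw [cross, cross, cross, mul_add_left, conj_add]
  module

lemma cross_add_right (x y y' : SplitOct) : cross x (y + y') = cross x y + cross x y' := by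
  rw [cross, cross, cross, mul_add_right, conj_add]
  module

lemma cross_smul_left (r : ℝ) (x y : SplitOct) : cross (r • x) y = r • cross x y := by
  rw [cross, cross, mul_smul_left, conj_smul]
  module

lemma cross_smul_right (r : ℝ) (x y : SplitOct) : cross x (r • y) = r • cross x y := by
  rw [cross, cross, mul_smul_right, conj_smul]
  module

lemma cross_zero_left (y : SplitOct) : cross 0 y = 0 := by
  simp [cross, mul_zero_left, conj_zero]

lemma cross_zero_right (x : SplitOct) : cross x 0 = 0 := by
  simp [cross, mul_zero_right, conj_zero]

lemma cross_mem_Im (x y : SplitOct) : cross x y ∈ Im := by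
  rw [mem_Im_iff, cross, conj_smul, conj_sub, conj_conj]
  module

lemma triple_add₁ (u u' v w : SplitOct) :
    triple (u + u') v w = triple u v w + triple u' v w := by
  rw [triple, triple, triple, cross_add_left, polar_add_left]

lemma triple_add₂ (u v v' w : SplitOct) :
    triple u (v + v') w = triple u v w + triple u v' w := by
  rw [triple, triple, triple, cross_add_right, polar_add_left]

lemma triple_add₃ (u v w w' : SplitOct) :
    triple u v (w + w') = triple u v w + triple u v w' :=
  polar_add_right _ _ _

lemma triple_smul₁ (r : ℝ) (u v w : SplitOct) : triple (r • u) v w = r * triple u v w := by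
  rw [triple, triple, cross_smul_left, polar_smul_left]

lemma triple_smul₂ (r : ℝ) (u v w : SplitOct) : triple u (r • v) w = r * triple u v w := by
  rw [triple, triple, cross_smul_right, polar_smul_left]

lemma triple_smul₃ (r : ℝ) (u v w : SplitOct) : triple u v (r • w) = r * triple u v w :=
  polar_smul_right _ _ _

lemma triple_zero₁ (v w : SplitOct) : triple 0 v w = 0 := by
  rw [triple, cross_zero_left, polar_zero_left]

lemma triple_zero₂ (u w : SplitOct) : triple u 0 w = 0 := by
  rw [triple, cross_zero_right, polar_zero_left]

lemma triple_zero₃ (u v : SplitOct) : triple u v 0 = 0 :=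
  polar_zero_right _

/-- The orthogonal complement of `P` inside the imaginary split octonions. -/
def orth (P : Submodule ℝ SplitOct) : Submodule ℝ SplitOct where
  carrier := {x | x ∈ Im ∧ ∀ y ∈ P, polar x y = 0}
  add_mem' := by
    rintro a b ⟨ha1, ha2⟩ ⟨hb1, hb2⟩
    exact ⟨Im.add_mem ha1 hb1, fun y hy => by
      rw [polar_add_left, ha2 y hy, hb2 y hy, add_zero]⟩
  zero_mem' := ⟨Im.zero_mem, fun y _ => polar_zero_left y⟩
  smul_mem' := by
    rintro r a ⟨ha1, ha2⟩
    exact ⟨Im.smul_mem r ha1, fun y hy => by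
      rw [polar_smul_left, ha2 y hy, mul_zero]⟩

/-- The annihilator `Ann x = {v ∈ Im 𝕆' | x × v = 0}`. -/
def Ann (x : SplitOct) : Submodule ℝ SplitOct where
  carrier := {v | v ∈ Im ∧ cross x v = 0}
  add_mem' := by
    rintro a b ⟨ha1, ha2⟩ ⟨hb1, hb2⟩
    exact ⟨Im.add_mem ha1 hb1, by rw [cross_add_right, ha2, hb2, add_zero]⟩
  zero_mem' := ⟨Im.zero_mem, cross_zero_right x⟩
  smul_mem' := by
    rintro r a ⟨ha1, ha2⟩
    exact ⟨Im.smul_mem r ha1, by rw [cross_smul_right, ha2, smul_zero]⟩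

/-- An isotropic line of `Im 𝕆'`. -/
def IsIsotropicLine (ℓ : Submodule ℝ SplitOct) : Prop :=
  ∃ x, x ∈ Im ∧ x ≠ 0 ∧ q x = 0 ∧ ℓ = Submodule.span ℝ {x}

/-- An annihilator photon: a 2-dimensional totally isotropic subspace of `Im 𝕆'`
on which the cross product vanishes identically. -/
def IsAnnihilatorPhoton (ω : Submodule ℝ SplitOct) : Prop :=
  ω ≤ Im ∧ Module.finrank ℝ ω = 2 ∧ (∀ x ∈ ω, q x = 0) ∧
    ∀ x ∈ ω, ∀ y ∈ ω, cross x y = 0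

lemma polar_symm (x y : SplitOct) : polar x y = polar y x := by
  simp only [polar_apply, Quaternion.re_mul, Quaternion.re_star, Quaternion.imI_star,
    Quaternion.imJ_star, Quaternion.imK_star]
  ring

lemma polar_self (x : SplitOct) : polar x x = q x := by
  simp [polar_apply, q_apply, Quaternion.self_mul_star]

lemma q_smul (r : ℝ) (x : SplitOct) : q (r • x) = r ^ 2 * q x := by
  simp only [q_apply, Prod.smul_fst, Prod.smul_snd, Quaternion.normSq_def',
    Quaternion.re_smul, Quaternion.imI_smul, Quaternion.imJ_smul, Quaternion.imK_smul,
    smul_eq_mul]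
  ring

lemma q_neg (x : SplitOct) : q (-x) = q x := by
  have := q_smul (-1) x
  simpa using this

lemma q_zero : q 0 = 0 := by simp [q_apply]

lemma q_add (x y : SplitOct) : q (x + y) = q x + q y + 2 * polar x y := by
  rw [polar]; ring

lemma finrank_splitOct : Module.finrank ℝ SplitOct = 8 := by
  rw [Module.finrank_prod, Quaternion.finrank_eq_four]

lemma one_not_mem_Im : ((1, 0) : SplitOct) ∉ Im := by
  rw [mem_Im_iff]
  intro h
  have h1 : (1 : ℍ[ℝ]) = -1 := by simpa [conj, Prod.ext_iff] using congrArg Prod.fst h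
  have h2 := congrArg QuaternionAlgebra.re h1
  norm_num at h2

/-- `polar` as a bilinear form. -/
def B : LinearMap.BilinForm ℝ SplitOct :=
  LinearMap.mk₂ ℝ polar polar_add_left polar_smul_left polar_add_right polar_smul_right

lemma B_apply (x y : SplitOct) : B x y = polar x y := rfl

lemma B_refl : B.IsRefl := by
  intro x y h
  rw [B_apply, polar_symm]
  exact h

lemma exists_decomp (P : Submodule ℝ SplitOct)
    (hPpos : ∀ v ∈ P, v ≠ 0 → 0 < q v) (x : SplitOct) :
    ∃ p ∈ P, ∃ m, (∀ y ∈ P, polar m y = 0) ∧ x = p + m := by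
  have hnd : (B.restrict P).Nondegenerate := by
    refine (LinearMap.IsRefl.nondegenerate_iff_separatingLeft (B := B.restrict P) (fun x y h => B_refl _ _ h)).2 ?_
    rintro ⟨m, hm⟩ h
    have hqm : q m = 0 := by
      have := h ⟨m, hm⟩
      simpa [LinearMap.BilinForm.restrict_apply, B_apply, polar_self] using this
    have : m = 0 := by
      by_contra hm0
      exact (hPpos m hm hm0).ne' hqm
    exact Subtype.ext this
  have hc := LinearMap.BilinForm.isCompl_orthogonal_of_restrict_nondegenerate B_refl hnd
  have hx : x ∈ P ⊔ B.orthogonal P := by rw [hc.sup_eq_top]; trivial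
  obtain ⟨p, hp, m, hm, hpm⟩ := Submodule.mem_sup.1 hx
  refine ⟨p, hp, m, fun y hy => ?_, hpm.symm⟩
  rw [polar_symm]
  exact (LinearMap.BilinForm.mem_orthogonal_iff.1 hm) y hy

lemma orth_no_isotropic (P : Submodule ℝ SplitOct) (hPIm : P ≤ Im)
    (hPdim : Module.finrank ℝ P = 3)
    (hPpos : ∀ v ∈ P, v ≠ 0 → 0 < q v)
    {n : SplitOct} (hn : n ∈ orth P) (hq : q n = 0) : n = 0 := by
  by_contra hn0
  have hnIm : n ∈ Im := hn.1
  have hpn : ∀ y ∈ P, polar n y = 0 := hn.2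
  have hnP : n ∉ P := fun h => (hPpos n h hn0).ne' hq
  set S : Submodule ℝ SplitOct := P ⊔ (ℝ ∙ n) with hS
  set W : Submodule ℝ SplitOct := Submodule.prod (⊥ : Submodule ℝ ℍ[ℝ]) ⊤ with hW
  have hWIm : W ≤ Im := by
    rintro ⟨a, b⟩ ⟨ha, -⟩
    have ha' : a = 0 := ha
    rw [mem_Im_iff, conj]
    simp [ha']
  have hWeq : W = LinearMap.range (LinearMap.inr ℝ ℍ[ℝ] ℍ[ℝ]) := by
    ext z
    simp [hW, Submodule.mem_prod, LinearMap.mem_range, Prod.ext_iff, eq_comm]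
  have hWrank : Module.finrank ℝ W = 4 := by
    rw [hWeq, ← (LinearEquiv.ofInjective _ (LinearMap.inr_injective (M := ℍ[ℝ]) (M₂ := ℍ[ℝ]))).finrank_eq,
      Quaternion.finrank_eq_four]
  have hPn_inf : P ⊓ (ℝ ∙ n) = ⊥ := by
    rw [eq_bot_iff]
    rintro z ⟨hzP, hzn⟩
    obtain ⟨s, rfl⟩ := Submodule.mem_span_singleton.1 hzn
    rcases eq_or_ne s 0 with rfl | hs
    · simp
    · exact absurd ((P.smul_mem_iff hs).1 hzP) hnP
  have hSrank : Module.finrank ℝ S = 4 := by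
    have h1 := Submodule.finrank_sup_add_finrank_inf_eq P (ℝ ∙ n)
    rw [hPn_inf, hPdim, finrank_span_singleton hn0] at h1
    simpa using h1
  have hSIm : S ≤ Im := sup_le hPIm ((Submodule.span_singleton_le_iff_mem n Im).2 hnIm)
  have hSW : S ⊓ W = ⊥ := by
    rw [eq_bot_iff]
    rintro z ⟨hzS, hzW⟩
    obtain ⟨p, hp, m, hm, rfl⟩ := Submodule.mem_sup.1 hzS
    obtain ⟨s, rfl⟩ := Submodule.mem_span_singleton.1 hm
    have hz1 : (p + s • n).1 = 0 := hzW.1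
    have hqz : q (p + s • n) = q p := by
      rw [q_add, q_smul, hq, polar_smul_right, polar_symm, hpn p hp]
      ring
    have hqz' : q (p + s • n) = - normSq (p + s • n).2 := by
      rw [q_apply, hz1]
      simp
    have hqp0 : q p ≤ 0 := by
      rw [← hqz, hqz']
      simp [normSq_nonneg]
    have hp0 : p = 0 := by
      by_contra h
      exact absurd (hPpos p hp h) (not_lt.2 hqp0)
    have h2 : normSq (p + s • n).2 = 0 := by
      have h3 : q p = 0 := by rw [hp0, q_zero]
      have h4 := hqz'
      rw [hqz, h3] at h4
      linarith
    have h2' : (p + s • n).2 = 0 := normSq_eq_zero.1 h2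
    exact Prod.ext hz1 h2'
  have hSWsub : S ⊔ W ≤ Im := sup_le hSIm hWIm
  have h8 : Module.finrank ℝ (S ⊔ W : Submodule ℝ SplitOct) = 8 := by
    have h1 := Submodule.finrank_sup_add_finrank_inf_eq S W
    rw [hSW, hSrank, hWrank] at h1
    simpa using h1
  have hIm8 : Module.finrank ℝ Im = 8 := by
    have hle : Module.finrank ℝ (S ⊔ W : Submodule ℝ SplitOct) ≤ Module.finrank ℝ Im :=
      Submodule.finrank_mono hSWsub
    have hle2 : Module.finrank ℝ Im ≤ 8 := finrank_splitOct ▸ Submodule.finrank_le Im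
    omega
  have : Im = ⊤ := Submodule.eq_top_of_finrank_eq (by rw [hIm8, finrank_splitOct])
  exact one_not_mem_Im (this ▸ Submodule.mem_top)

/-- For a spacelike 3-plane `P ⊆ Im 𝕆'`, the map `(u,v) ↦ ℝ(u+v)`, for
`u ∈ P` with `q u = 1` and `v ∈ P⊥` with `q v = -1`, surjects onto the isotropic lines of
`Im 𝕆'`, exactly two-to-one: the fiber over each isotropic line is a pair `{(u,v), (-u,-v)}`. -/
theorem isotropic_lines_two_to_one
    (P : Submodule ℝ SplitOct) (hPIm : P ≤ Im)
    (hPdim : Module.finrank ℝ P = 3)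
    (hPpos : ∀ v ∈ P, v ≠ 0 → 0 < q v) :
    (∀ u v : SplitOct, u ∈ P → q u = 1 → v ∈ orth P → q v = -1 →
      IsIsotropicLine (Submodule.span ℝ {u + v})) ∧
    ∀ ℓ : Submodule ℝ SplitOct, IsIsotropicLine ℓ →
      ∃ u v : SplitOct,
        (u ∈ P ∧ q u = 1 ∧ v ∈ orth P ∧ q v = -1) ∧
        {p : SplitOct × SplitOct |
            p.1 ∈ P ∧ q p.1 = 1 ∧ p.2 ∈ orth P ∧ q p.2 = -1 ∧
              Submodule.span ℝ {p.1 + p.2} = ℓ}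
          = {(u, v), (-u, -v)} := by
  -- Trivial intersection of `P` and `orth P`.
  have hinf : ∀ d : SplitOct, d ∈ P → d ∈ orth P → d = 0 := by
    intro d hdP hdO
    by_contra hd0
    have h1 : polar d d = 0 := hdO.2 d hdP
    rw [polar_self] at h1
    exact (hPpos d hdP hd0).ne' h1
  have hsum_ne : ∀ u v : SplitOct, u ∈ P → q u = 1 → v ∈ orth P → u + v ≠ 0 := by
    intro u v huP hqu hvO h0
    have huO : u ∈ orth P := by
      rw [eq_neg_of_add_eq_zero_left h0]; exact (orth P).neg_mem hvO
    have := hinf u huP huO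
    rw [this, q_zero] at hqu
    norm_num at hqu
  have part1 : ∀ u v : SplitOct, u ∈ P → q u = 1 → v ∈ orth P → q v = -1 →
      IsIsotropicLine (Submodule.span ℝ {u + v}) := by
    intro u v huP hqu hvO hqv
    refine ⟨u + v, Im.add_mem (hPIm huP) hvO.1, hsum_ne u v huP hqu hvO, ?_, rfl⟩
    have hpol : polar u v = 0 := by rw [polar_symm]; exact hvO.2 u huP
    rw [q_add, hqu, hqv, hpol]; ring
  refine ⟨part1, ?_⟩
  rintro ℓ ⟨x, hxIm, hx0, hxq, rfl⟩
  obtain ⟨p, hpP, m, hmP, hxpm⟩ := exists_decomp P hPpos x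
  have hmIm : m ∈ Im := by
    have hm' : m = x - p := by rw [hxpm]; abel
    rw [hm']; exact Im.sub_mem hxIm (hPIm hpP)
  have hmO : m ∈ orth P := ⟨hmIm, hmP⟩
  have hpolpm : polar p m = 0 := by rw [polar_symm]; exact hmP p hpP
  have hp0 : p ≠ 0 := by
    rintro rfl
    have hxm : x = m := by rw [hxpm, zero_add]
    exact hx0 (hxm ▸ orth_no_isotropic P hPIm hPdim hPpos hmO (hxm ▸ hxq))
  have hqp : 0 < q p := hPpos p hpP hp0
  have hqm : q m = - q p := by
    have := hxq
    rw [hxpm, q_add, hpolpm] at this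
    linarith
  set t : ℝ := (Real.sqrt (q p))⁻¹ with ht_def
  have ht : 0 < t := inv_pos.2 (Real.sqrt_pos.2 hqp)
  have ht2 : t ^ 2 * q p = 1 := by
    rw [ht_def, inv_pow, Real.sq_sqrt hqp.le, inv_mul_cancel₀ hqp.ne']
  set u : SplitOct := t • p with hu_def
  set v : SplitOct := t • m with hv_def
  have huP : u ∈ P := P.smul_mem t hpP
  have hqu : q u = 1 := by rw [hu_def, q_smul, ht2]
  have hvO : v ∈ orth P := (orth P).smul_mem t hmO
  have hqv : q v = -1 := by rw [hv_def, q_smul, hqm, mul_neg, ht2]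
  have huv : u + v = t • x := by rw [hu_def, hv_def, hxpm, smul_add]
  have hspan : Submodule.span ℝ {u + v} = Submodule.span ℝ {x} := by
    rw [huv]
    exact Submodule.span_singleton_smul_eq (isUnit_iff_ne_zero.2 ht.ne') x
  refine ⟨u, v, ⟨huP, hqu, hvO, hqv⟩, ?_⟩
  ext ⟨u', v'⟩
  simp only [Set.mem_setOf_eq, Set.mem_insert_iff, Set.mem_singleton_iff, Prod.mk.injEq]
  constructor
  · rintro ⟨hu'P, hqu', hv'O, hqv', hsp⟩
    have hmem : u' + v' ∈ Submodule.span ℝ {x} :=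
      hsp ▸ Submodule.mem_span_singleton_self (u' + v')
    obtain ⟨c, hc⟩ := Submodule.mem_span_singleton.1 hmem
    have hc0 : c ≠ 0 := by
      rintro rfl
      rw [zero_smul] at hc
      exact hsum_ne u' v' hu'P hqu' hv'O hc.symm
    have hd : u' - c • p = c • m - v' := by
      have hsum : c • p + c • m = u' + v' := by
        rw [← smul_add, ← hxpm, hc]
      rw [sub_eq_sub_iff_add_eq_add, ← hsum]; abel
    have hdP : u' - c • p ∈ P := P.sub_mem hu'P (P.smul_mem c hpP)
    have hdO : u' - c • p ∈ orth P := by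
      rw [hd]; exact (orth P).sub_mem ((orth P).smul_mem c hmO) hv'O
    have hu'e : u' = c • p := sub_eq_zero.1 (hinf _ hdP hdO)
    have hv'e : v' = c • m := by
      have h1 := hd
      rw [hu'e, sub_self] at h1
      exact (sub_eq_zero.1 h1.symm).symm
    have hc2 : c ^ 2 * q p = 1 := by rw [← q_smul, ← hu'e, hqu']
    have hct : c = t ∨ c = -t := by
      have h3 : (c - t) * (c + t) = 0 := by
        have : c ^ 2 = t ^ 2 := by
          have := ht2
          field_simp at hc2 this ⊢
          nlinarith [hc2, this]
        nlinarith [this]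
      rcases mul_eq_zero.1 h3 with h | h
      · left; linarith
      · right; linarith
    rcases hct with rfl | rfl
    · left; exact ⟨hu'e, hv'e⟩
    · right
      constructor
      · rw [hu'e, hu_def, neg_smul]
      · rw [hv'e, hv_def, neg_smul]
  · rintro (⟨rfl, rfl⟩ | ⟨rfl, rfl⟩)
    · exact ⟨huP, hqu, hvO, hqv, hspan⟩
    · refine ⟨P.neg_mem huP, by rw [q_neg, hqu], (orth P).neg_mem hvO, by rw [q_neg, hqv], ?_⟩
      have : -u + -v = (-1 : ℝ) • (u + v) := by module
      rw [this, Submodule.span_singleton_smul_eq (isUnit_iff_ne_zero.2 (by norm_num)) _, hspan]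

end SplitOct
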